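/- Scaled counterfactual invariance: if the input coordinate j is rescaled by a factor λ > 0 (i.e., z_j ↦ λz_j, (μ_c)_j ↦ λ(μ_c)_j, and Σ_c ↦ D_λΣ_cD_λ where D_λ is the diagonal matrix with λ in position j and 1 elsewhere), then the counterfactual ε*_j rescales to λε*_j, while the scaled counterfactual ε*_j / √([Σ_{c*}]_{jj}) is invariant. -/

import Mathlib

open Matrix

/-- Multivariate Gaussian density N(z | μ, S) on ℝᴺ. -/
noncomputable def gaussianPDF {N : ℕ} (μ : Fin N → ℝ) (S : Matrix (Fin N) (Fin N) ℝ)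
    (z : Fin N → ℝ) : ℝ :=
  (2 * Real.pi) ^ (-(N : ℝ) / 2) * S.det ^ (-(1 : ℝ) / 2) *
    Real.exp (-(1 / 2) * ((z - μ) ⬝ᵥ S⁻¹.mulVec (z - μ)))

/-- Set of perturbations of coordinate `j` that flip a binary QDA prediction from
class 1 (predicted at `z`) to class 2. -/
noncomputable def flipSet {N : ℕ} (μ₁ μ₂ : Fin N → ℝ) (S₁ S₂ : Matrix (Fin N) (Fin N) ℝ)
    (p₁ p₂ : ℝ) (z : Fin N → ℝ) (j : Fin N) : Set ℝ :=
  {t : ℝ | p₁ * gaussianPDF μ₁ S₁ (z + t • (Pi.single j 1 : Fin N → ℝ)) ≤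
      p₂ * gaussianPDF μ₂ S₂ (z + t • (Pi.single j 1 : Fin N → ℝ))}

lemma diag_det {N : ℕ} (j : Fin N) (l : ℝ) :
    (Matrix.diagonal (fun k => if k = j then l else 1)).det = l := by
  simp [Matrix.det_diagonal, Finset.prod_ite_eq']

lemma gauss_scale {N : ℕ} (μ x : Fin N → ℝ) (S : Matrix (Fin N) (Fin N) ℝ) (hS : S.PosDef)
    (j : Fin N) (l : ℝ) (hl : 0 < l) :
    gaussianPDF ((Matrix.diagonal (fun k => if k = j then l else 1)).mulVec μ)
      ((Matrix.diagonal (fun k => if k = j then l else 1)) * S *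
        (Matrix.diagonal (fun k => if k = j then l else 1)))
      ((Matrix.diagonal (fun k => if k = j then l else 1)).mulVec x)
      = l⁻¹ * gaussianPDF μ S x := by
  set D := Matrix.diagonal (fun k => if k = j then l else 1) with hD
  have hdetD : D.det = l := diag_det j l
  have hDu : IsUnit D.det := by rw [hdetD]; exact (isUnit_iff_ne_zero.mpr hl.ne')
  have hSu : IsUnit S.det := isUnit_iff_ne_zero.mpr hS.det_pos.ne'
  have hdet : (D * S * D).det = (l * l) * S.det := by
    rw [Matrix.det_mul, Matrix.det_mul, hdetD]; ring
  have hDt : Dᵀ = D := Matrix.diagonal_transpose _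
  -- quadratic form
  have hquad : (D.mulVec x - D.mulVec μ) ⬝ᵥ (D * S * D)⁻¹.mulVec (D.mulVec x - D.mulVec μ)
      = (x - μ) ⬝ᵥ S⁻¹.mulVec (x - μ) := by
    have h1 : D.mulVec x - D.mulVec μ = D.mulVec (x - μ) := (Matrix.mulVec_sub D x μ).symm
    rw [h1]
    have h2 : (D * S * D)⁻¹ = D⁻¹ * S⁻¹ * D⁻¹ := by
      rw [Matrix.mul_inv_rev, Matrix.mul_inv_rev]
      rw [Matrix.mul_assoc]
    rw [h2, Matrix.mulVec_mulVec, Matrix.mul_assoc, Matrix.mul_assoc,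
      Matrix.nonsing_inv_mul D hDu, Matrix.mul_one]
    rw [Matrix.dotProduct_mulVec, ← Matrix.vecMul_vecMul]
    have h3 : Matrix.vecMul (D.mulVec (x - μ)) D⁻¹ = x - μ := by
      rw [← Matrix.mulVec_transpose, Matrix.transpose_nonsing_inv, hDt,
        Matrix.mulVec_mulVec, Matrix.nonsing_inv_mul D hDu, Matrix.one_mulVec]
    rw [h3, ← Matrix.dotProduct_mulVec]
  -- determinant factor
  have hrpow : ((D * S * D).det : ℝ) ^ (-(1:ℝ)/2) = l⁻¹ * S.det ^ (-(1:ℝ)/2) := by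
    rw [hdet, Real.mul_rpow (by positivity) hS.det_pos.le]
    congr 1
    have : l * l = l ^ ((2:ℕ) : ℝ) := by rw [Real.rpow_natCast]; ring
    rw [this, ← Real.rpow_mul hl.le]
    norm_num [Real.rpow_neg_one]
  unfold gaussianPDF
  rw [hquad, hrpow]
  ring

theorem scaled_counterfactual_invariance {N : ℕ} (μ₁ μ₂ z : Fin N → ℝ)
    (S₁ S₂ : Matrix (Fin N) (Fin N) ℝ) (hS₁ : S₁.PosDef) (hS₂ : S₂.PosDef)
    (p₁ p₂ : ℝ) (hp₁ : 0 < p₁) (hp₂ : 0 < p₂) (j : Fin N) (l : ℝ) (hl : 0 < l)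
    (ε : ℝ) (hmem : ε ∈ flipSet μ₁ μ₂ S₁ S₂ p₁ p₂ z j)
    (hmin : IsLeast (abs '' flipSet μ₁ μ₂ S₁ S₂ p₁ p₂ z j) |ε|) :
    let D : Matrix (Fin N) (Fin N) ℝ := Matrix.diagonal (fun k => if k = j then l else 1)
    -- the decision regions transform by D: the flip set rescales by l
    (∀ t : ℝ, t ∈ flipSet μ₁ μ₂ S₁ S₂ p₁ p₂ z j ↔
        l * t ∈ flipSet (D.mulVec μ₁) (D.mulVec μ₂) (D * S₁ * D) (D * S₂ * D)
          p₁ p₂ (D.mulVec z) j) ∧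
    -- hence the counterfactual rescales to l * ε
    (l * ε ∈ flipSet (D.mulVec μ₁) (D.mulVec μ₂) (D * S₁ * D) (D * S₂ * D)
        p₁ p₂ (D.mulVec z) j ∧
      IsLeast (abs '' flipSet (D.mulVec μ₁) (D.mulVec μ₂) (D * S₁ * D) (D * S₂ * D)
        p₁ p₂ (D.mulVec z) j) |l * ε|) ∧
    -- while the scaled counterfactual is invariant
    (l * ε) / Real.sqrt ((D * S₁ * D) j j) = ε / Real.sqrt (S₁ j j) := by
  intro D
  have hDdef : D = Matrix.diagonal (fun k => if k = j then l else 1) := rfl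
  have hmove : ∀ t : ℝ, D.mulVec z + (l * t) • (Pi.single j 1 : Fin N → ℝ)
      = D.mulVec (z + t • (Pi.single j 1 : Fin N → ℝ)) := by
    intro t; funext k
    simp only [hDdef, Pi.add_apply, Pi.smul_apply, smul_eq_mul, Matrix.mulVec_diagonal,
      Pi.single_apply]
    by_cases h : k = j <;> simp [h] <;> ring
  have hiff : ∀ t : ℝ, t ∈ flipSet μ₁ μ₂ S₁ S₂ p₁ p₂ z j ↔
      l * t ∈ flipSet (D.mulVec μ₁) (D.mulVec μ₂) (D * S₁ * D) (D * S₂ * D)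
        p₁ p₂ (D.mulVec z) j := by
    intro t
    simp only [flipSet, Set.mem_setOf_eq, hmove t,
      gauss_scale μ₁ (z + t • (Pi.single j 1 : Fin N → ℝ)) S₁ hS₁ j l hl,
      gauss_scale μ₂ (z + t • (Pi.single j 1 : Fin N → ℝ)) S₂ hS₂ j l hl]
    rw [hDdef, gauss_scale μ₁ (z + t • (Pi.single j 1 : Fin N → ℝ)) S₁ hS₁ j l hl,
      gauss_scale μ₂ (z + t • (Pi.single j 1 : Fin N → ℝ)) S₂ hS₂ j l hl]
    have hli : (0:ℝ) < l⁻¹ := inv_pos.mpr hl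
    constructor
    · intro h; nlinarith
    · intro h; nlinarith
  refine ⟨hiff, ⟨(hiff ε).mp hmem, ?_⟩, ?_⟩
  · -- IsLeast
    have hF' : flipSet (D.mulVec μ₁) (D.mulVec μ₂) (D * S₁ * D) (D * S₂ * D)
        p₁ p₂ (D.mulVec z) j = (fun t => l * t) '' flipSet μ₁ μ₂ S₁ S₂ p₁ p₂ z j := by
      ext s; constructor
      · intro hs
        refine ⟨s / l, (hiff (s / l)).mpr ?_, by field_simp⟩
        have : l * (s / l) = s := by field_simp
        rwa [this]
      · rintro ⟨t, ht, rfl⟩; exact (hiff t).mp ht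
    constructor
    · exact ⟨l * ε, (hiff ε).mp hmem, rfl⟩
    · rintro y ⟨s, hs, rfl⟩
      rw [hF'] at hs
      rcases hs with ⟨t, ht, rfl⟩
      rw [abs_mul, abs_mul, abs_of_pos hl]
      exact mul_le_mul_of_nonneg_left (hmin.2 ⟨t, ht, rfl⟩) hl.le
  · -- invariance
    have hentry : (D * S₁ * D) j j = l * (l * S₁ j j) := by
      simp [D, Matrix.mul_diagonal, Matrix.diagonal_mul]; ring
    rw [hentry]
    have : l * (l * S₁ j j) = (l * l) * S₁ j j := by ring
    rw [this, Real.sqrt_mul (by positivity), Real.sqrt_mul_self hl.le,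
      mul_div_mul_left ε _ hl.ne']
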